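/- Let n ≥ 1, a > 1, and ξ_1, ..., ξ_n be i.i.d. real random variables with E[ξ] = 0, variance σ² > 0, and E[ξ⁴]/σ⁴ ≤ K. Let ξ̄_n be the sample mean and σ̂² := n^{-1}∑(ξ_i - ξ̄_n)² the empirical variance. Then for every x > 0: P(√n |ξ̄_n| > σ̂ x) ≤ 2(Φ(-x/√(a(1+x²/n))) + min(Δ_E, Δ_B)) + exp(-n(1-1/a)²/(2K)), where Δ_B and Δ_E are the Berry–Esseen and Edgeworth distances of √n ξ̄_n/σ to N(0,1). -/

import Mathlib

open MeasureTheory ProbabilityTheory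

/-- The standard normal density. -/
noncomputable def gpdf (t : ℝ) : ℝ := (Real.sqrt (2 * Real.pi))⁻¹ * Real.exp (-(t ^ 2) / 2)

/-- The standard normal c.d.f. `Φ`. -/
noncomputable def Phi (x : ℝ) : ℝ := ∫ t in Set.Iic x, gpdf t

lemma gpdf_nonneg (t : ℝ) : 0 ≤ gpdf t := by
  unfold gpdf; positivity

lemma gpdf_even (t : ℝ) : gpdf (-t) = gpdf t := by
  unfold gpdf; rw [neg_pow]; ring_nf

lemma gpdf_le (t : ℝ) : gpdf t ≤ 1 := by
  unfold gpdf
  have h1 : Real.exp (-(t ^ 2) / 2) ≤ 1 := by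
    rw [show (1:ℝ) = Real.exp 0 by simp]
    apply Real.exp_le_exp.mpr; nlinarith [sq_nonneg t]
  have h2 : (1:ℝ) ≤ Real.sqrt (2 * Real.pi) := by
    rw [show (1:ℝ) = Real.sqrt 1 by simp]
    apply Real.sqrt_le_sqrt; nlinarith [Real.pi_gt_three]
  calc (Real.sqrt (2 * Real.pi))⁻¹ * Real.exp (-(t ^ 2) / 2)
      ≤ 1 * 1 := by
        apply mul_le_mul _ h1 (Real.exp_pos _).le zero_le_one
        rw [inv_le_one_iff₀]; right; exact h2
    _ = 1 := by ring
  
lemma integrable_gpdf : Integrable gpdf := by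
  unfold gpdf
  apply Integrable.const_mul
  have := integrable_exp_neg_mul_sq (b := (1/2 : ℝ)) (by norm_num)
  convert this using 2 with t
  ring_nf

lemma integral_gpdf : ∫ t, gpdf t = 1 := by
  unfold gpdf
  rw [integral_const_mul]
  have := integral_gaussian (1/2 : ℝ)
  have h2 : ∀ t : ℝ, Real.exp (-(t^2)/2) = Real.exp (-(1/2) * t^2) := by intro t; ring_nf
  simp_rw [h2]
  rw [this]
  have : Real.pi / (1/2) = 2 * Real.pi := by ring
  rw [this, inv_mul_cancel₀]
  positivity

lemma Phi_nonneg (x : ℝ) : 0 ≤ Phi x :=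
  integral_nonneg fun t => gpdf_nonneg t

lemma Phi_add_Phi_neg (x : ℝ) : Phi x + Phi (-x) = 1 := by
  unfold Phi
  have h1 : ∫ t in Set.Iic (-x), gpdf t = ∫ t in Set.Ioi x, gpdf t := by
    rw [show (∫ t in Set.Iic (-x), gpdf t) = ∫ t in Set.Iic (-x), gpdf (-t) by
      simp_rw [gpdf_even]]
    rw [integral_comp_neg_Iic, neg_neg]
  rw [h1, ← integral_gpdf,
    ← intervalIntegral.integral_Iic_add_Ioi (b := x) integrable_gpdf.integrableOn
      integrable_gpdf.integrableOn]

lemma Phi_le_one (x : ℝ) : Phi x ≤ 1 := by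
  have := Phi_add_Phi_neg x
  have := Phi_nonneg (-x)
  linarith

lemma exp_neg_le_quad {u : ℝ} (hu : 0 ≤ u) : Real.exp (-u) ≤ 1 - u + u ^ 2 / 2 := by
  set f : ℝ → ℝ := fun u => 1 - u + u ^ 2 / 2 - Real.exp (-u) with hf
  have hderiv : ∀ t : ℝ, HasDerivAt f (-1 + t + Real.exp (-t)) t := by
    intro t
    have h1 : HasDerivAt (fun u : ℝ => Real.exp (-u)) (-Real.exp (-t)) t := by
      simpa [Function.comp_def] using (Real.hasDerivAt_exp (-t)).comp t (hasDerivAt_neg t)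
    have h2 : HasDerivAt (fun u : ℝ => 1 - u + u ^ 2 / 2) (-1 + t) t := by
      have := ((hasDerivAt_id t).const_sub 1).add
        (((hasDerivAt_id t).pow 2).div_const 2)
      simpa [mul_comm, Pi.add_def] using this
    simpa [hf, Pi.sub_def] using h2.sub h1
  have hmono : MonotoneOn f (Set.Ici 0) := by
    apply monotoneOn_of_deriv_nonneg (convex_Ici 0)
    · exact (Continuous.continuousOn (by continuity))
    · intro t ht
      exact (hderiv t).differentiableAt.differentiableWithinAt
    · intro t ht
      rw [(hderiv t).deriv]
      have := Real.add_one_le_exp (-t)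
      linarith
  have h0 : f 0 = 0 := by simp [hf]
  have := hmono (Set.self_mem_Ici) hu hu
  rw [h0] at this
  simp only [hf] at this
  linarith

lemma sq_mul_exp_le (x : ℝ) : x ^ 2 * Real.exp (-(x ^ 2) / 2) ≤ 2 := by
  have h1 : 1 + x ^ 2 / 2 ≤ Real.exp (x ^ 2 / 2) := by
    have := Real.add_one_le_exp (x ^ 2 / 2); linarith
  have h2 : Real.exp (-(x ^ 2) / 2) = (Real.exp (x ^ 2 / 2))⁻¹ := by
    rw [← Real.exp_neg]; ring_nf
  rw [h2]
  rw [mul_inv_le_iff₀ (Real.exp_pos _)]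
  nlinarith [sq_nonneg x]

lemma chernoff_lower {Ω : Type*} [MeasurableSpace Ω] (μ : Measure Ω) [IsProbabilityMeasure μ]
    (n : ℕ) (η : Fin n → Ω → ℝ) (η₀ : Ω → ℝ)
    (hmeasη : ∀ i, Measurable (η i)) (hmeasη₀ : Measurable η₀)
    (hindepη : iIndepFun η μ)
    (hidη : ∀ i, IdentDistrib (η i) η₀ μ μ)
    (hnonneg : ∀ ω, 0 ≤ η₀ ω) (hnonnegi : ∀ i ω, 0 ≤ η i ω)
    (hint1 : Integrable η₀ μ) (hint2 : Integrable (fun ω => η₀ ω ^ 2) μ)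
    (m M : ℝ) (hm : m = ∫ ω, η₀ ω ∂μ) (hM : M = ∫ ω, η₀ ω ^ 2 ∂μ)
    (l : ℝ) (hl : 0 ≤ l) (s : ℝ) :
    (μ {ω | ∑ i, η i ω ≤ s}).toReal
      ≤ Real.exp (l * s - l * n * m + l ^ 2 * n * M / 2) := by
  have hexp_le_one : ∀ (g : Ω → ℝ), (∀ ω, 0 ≤ g ω) → ∀ ω,
      Real.exp (-l * g ω) ≤ 1 := by
    intro g hg ω
    rw [← Real.exp_zero]
    apply Real.exp_le_exp.mpr
    have := mul_nonneg hl (hg ω)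
    nlinarith
  have hint_exp : ∀ i, Integrable (fun ω => Real.exp (-l * η i ω)) μ := by
    intro i
    refine Integrable.mono' (integrable_const 1) ?_ ?_
    · exact (((hmeasη i).const_mul (-l)).exp).aestronglyMeasurable
    · filter_upwards with ω
      rw [Real.norm_eq_abs, abs_of_pos (Real.exp_pos _)]
      exact hexp_le_one _ (hnonnegi i) ω
  have hint_exp_sum : Integrable (fun ω => Real.exp (-l * (∑ i, η i) ω)) μ := by
    simp only [Finset.sum_apply]
    refine Integrable.mono' (integrable_const 1) ?_ ?_
    · exact (((Finset.measurable_sum _ (fun i _ => hmeasη i)).const_mul (-l)).exp).aestronglyMeasurable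
    · filter_upwards with ω
      rw [Real.norm_eq_abs, abs_of_pos (Real.exp_pos _)]
      exact hexp_le_one _ (fun ω => Finset.sum_nonneg fun i _ => hnonnegi i ω) ω
  have hcher := measure_le_le_exp_mul_mgf (μ := μ) (X := ∑ i, η i) s
    (neg_nonpos.mpr hl) hint_exp_sum
  have hset : {ω | (∑ i, η i) ω ≤ s} = {ω | ∑ i, η i ω ≤ s} := by
    ext ω; simp [Finset.sum_apply]
  rw [hset] at hcher
  have hmgf_eq : mgf (∑ i, η i) μ (-l) = ∏ i : Fin n, mgf (η i) μ (-l) :=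
    hindepη.mgf_sum hmeasη Finset.univ
  have hu : Measurable (fun u : ℝ => Real.exp (-l * u)) :=
    (measurable_id.const_mul (-l)).exp
  have hmgf_i : ∀ i, mgf (η i) μ (-l) = ∫ ω, Real.exp (-l * η₀ ω) ∂μ := by
    intro i
    exact ((hidη i).comp hu).integral_eq
  set c : ℝ := ∫ ω, Real.exp (-l * η₀ ω) ∂μ with hc
  have hc_nonneg : 0 ≤ c := integral_nonneg fun ω => (Real.exp_pos _).le
  have hint_exp₀ : Integrable (fun ω => Real.exp (-l * η₀ ω)) μ := by
    refine Integrable.mono' (integrable_const 1) ((hmeasη₀.const_mul (-l)).exp).aestronglyMeasurable ?_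
    filter_upwards with ω
    rw [Real.norm_eq_abs, abs_of_pos (Real.exp_pos _)]
    exact hexp_le_one _ hnonneg ω
  have hc_le : c ≤ Real.exp (-l * m + l ^ 2 * M / 2) := by
    have iC : Integrable (fun ω => l * η₀ ω) μ := hint1.const_mul l
    have iA : Integrable (fun ω => 1 - l * η₀ ω) μ := (integrable_const 1).sub iC
    have iB : Integrable (fun ω => l ^ 2 * η₀ ω ^ 2 / 2) μ :=
      (hint2.const_mul (l ^ 2)).div_const 2
    have hint_rhs : Integrable (fun ω => 1 - l * η₀ ω + l ^ 2 * η₀ ω ^ 2 / 2) μ := iA.add iB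
    have h1 : c ≤ ∫ ω, (1 - l * η₀ ω + l ^ 2 * η₀ ω ^ 2 / 2) ∂μ := by
      refine integral_mono hint_exp₀ hint_rhs fun ω => ?_
      have := exp_neg_le_quad (mul_nonneg hl (hnonneg ω))
      calc Real.exp (-l * η₀ ω) = Real.exp (-(l * η₀ ω)) := by ring_nf
        _ ≤ 1 - l * η₀ ω + (l * η₀ ω) ^ 2 / 2 := this
        _ = 1 - l * η₀ ω + l ^ 2 * η₀ ω ^ 2 / 2 := by ring
    have h2 : ∫ ω, (1 - l * η₀ ω + l ^ 2 * η₀ ω ^ 2 / 2) ∂μ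
        = 1 - l * m + l ^ 2 * M / 2 := by
      rw [integral_add iA iB, integral_sub (integrable_const 1) iC,
        integral_const, integral_const_mul, integral_div, integral_const_mul]
      simp [hm, hM]
    rw [h2] at h1
    calc c ≤ 1 - l * m + l ^ 2 * M / 2 := h1
      _ = 1 + (-l * m + l ^ 2 * M / 2) := by ring
      _ ≤ Real.exp (-l * m + l ^ 2 * M / 2) := by
          have := Real.add_one_le_exp (-l * m + l ^ 2 * M / 2)
          linarith
  have hmgf_le : mgf (∑ i, η i) μ (-l) ≤ Real.exp (-l * m + l ^ 2 * M / 2) ^ n := by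
    rw [hmgf_eq]
    calc ∏ i : Fin n, mgf (η i) μ (-l) = c ^ n := by
          simp_rw [hmgf_i]; rw [Finset.prod_const, Finset.card_univ, Fintype.card_fin]
      _ ≤ Real.exp (-l * m + l ^ 2 * M / 2) ^ n := by
          exact pow_le_pow_left₀ hc_nonneg hc_le n
  calc (μ {ω | ∑ i, η i ω ≤ s}).toReal
      ≤ Real.exp (-(-l) * s) * mgf (∑ i, η i) μ (-l) := hcher
    _ ≤ Real.exp (l * s) * Real.exp (-l * m + l ^ 2 * M / 2) ^ n := by
        rw [neg_neg]
        exact mul_le_mul_of_nonneg_left hmgf_le (Real.exp_pos _).le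
    _ = Real.exp (l * s - l * n * m + l ^ 2 * n * M / 2) := by
        rw [← Real.exp_nat_mul, ← Real.exp_add]
        ring_nf

lemma one_le_sqrt_two_pi : (1:ℝ) ≤ Real.sqrt (2 * Real.pi) := by
  rw [show (1:ℝ) = Real.sqrt 1 by simp]
  apply Real.sqrt_le_sqrt; nlinarith [Real.pi_gt_three]

lemma corr_abs_le (c x : ℝ) : |c * (1 - x ^ 2) * gpdf x| ≤ |c| * 3 := by
  rw [abs_mul, abs_mul, abs_of_nonneg (gpdf_nonneg x)]
  rw [mul_assoc]
  apply mul_le_mul_of_nonneg_left _ (abs_nonneg c)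
  have h1 : |1 - x ^ 2| ≤ 1 + x ^ 2 := by
    rw [abs_le]; constructor <;> nlinarith [sq_nonneg x]
  calc |1 - x ^ 2| * gpdf x ≤ (1 + x ^ 2) * gpdf x :=
        mul_le_mul_of_nonneg_right h1 (gpdf_nonneg x)
    _ = gpdf x + x ^ 2 * gpdf x := by ring
    _ ≤ 1 + (Real.sqrt (2 * Real.pi))⁻¹ * (x ^ 2 * Real.exp (-(x ^ 2) / 2)) := by
        apply add_le_add (gpdf_le x)
        apply le_of_eq; unfold gpdf; ring
    _ ≤ 1 + 1 * 2 := by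
        apply add_le_add le_rfl
        apply mul_le_mul _ (sq_mul_exp_le x) (by positivity) zero_le_one
        rw [inv_le_one_iff₀]; right; exact one_le_sqrt_two_pi
    _ = 3 := by norm_num

lemma tail_bound {Ω : Type*} [MeasurableSpace Ω] (μ : Measure Ω) [IsProbabilityMeasure μ]
    (S : Ω → ℝ) (hSmeas : Measurable S) (c ΔB ΔE : ℝ)
    (hΔB : ΔB = ⨆ x : ℝ, |(μ {ω | S ω ≤ x}).toReal - Phi x|)
    (hΔE : ΔE = ⨆ x : ℝ,
      |(μ {ω | S ω ≤ x}).toReal - Phi x - c * (1 - x ^ 2) * gpdf x|)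
    (y : ℝ) (hy : 0 ≤ y) :
    (μ {ω | y < |S ω|}).toReal ≤ 2 * (Phi (-y) + min ΔE ΔB) := by
  set p : ℝ → ℝ := fun x => (μ {ω | S ω ≤ x}).toReal with hp
  have hp_le_one : ∀ x, p x ≤ 1 := fun x => by
    simpa using ENNReal.toReal_mono (by norm_num) (prob_le_one (μ := μ))
  have hp_nonneg : ∀ x, 0 ≤ p x := fun x => ENNReal.toReal_nonneg
  have bddB : BddAbove (Set.range fun x => |p x - Phi x|) := by
    refine ⟨2, ?_⟩
    rintro r ⟨x, rfl⟩
    have := abs_sub_abs_le_abs_sub (p x) (Phi x)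
    have h1 := abs_sub (p x) (Phi x)
    rw [abs_sub_comm] at h1
    calc |p x - Phi x| ≤ |p x| + |Phi x| := abs_sub _ _
      _ ≤ 1 + 1 := add_le_add
          (by rw [abs_of_nonneg (hp_nonneg x)]; exact hp_le_one x)
          (by rw [abs_of_nonneg (Phi_nonneg x)]; exact Phi_le_one x)
      _ = 2 := by norm_num
  have bddE : BddAbove (Set.range fun x =>
      |p x - Phi x - c * (1 - x ^ 2) * gpdf x|) := by
    refine ⟨2 + |c| * 3, ?_⟩
    rintro r ⟨x, rfl⟩
    calc |p x - Phi x - c * (1 - x ^ 2) * gpdf x|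
        ≤ |p x - Phi x| + |c * (1 - x ^ 2) * gpdf x| := abs_sub _ _
      _ ≤ 2 + |c| * 3 := by
          apply add_le_add _ (corr_abs_le c x)
          calc |p x - Phi x| ≤ |p x| + |Phi x| := abs_sub _ _
            _ ≤ 1 + 1 := add_le_add
                (by rw [abs_of_nonneg (hp_nonneg x)]; exact hp_le_one x)
                (by rw [abs_of_nonneg (Phi_nonneg x)]; exact Phi_le_one x)
            _ = 2 := by norm_num
  have hDB : ∀ x, |p x - Phi x| ≤ ΔB := fun x => hΔB ▸ le_ciSup bddB x
  have hDE : ∀ x, |p x - Phi x - c * (1 - x ^ 2) * gpdf x| ≤ ΔE := fun x =>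
    hΔE ▸ le_ciSup bddE x
  -- measure of the two-sided tail
  have hms : ∀ z : ℝ, MeasurableSet {ω | S ω ≤ z} := fun z =>
    hSmeas measurableSet_Iic
  have hgt : ∀ z : ℝ, (μ {ω | z < S ω}).toReal = 1 - p z := by
    intro z
    have hcompl : {ω | z < S ω} = {ω | S ω ≤ z}ᶜ := by
      ext ω; simp [not_le]
    rw [hcompl, prob_compl_eq_one_sub (hms z),
      ENNReal.toReal_sub_of_le prob_le_one (by norm_num)]
    simp [hp]
  have hsub : {ω | y < |S ω|} ⊆ {ω | y < S ω} ∪ {ω | S ω ≤ -y} := by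
    intro ω h
    simp only [Set.mem_setOf_eq] at h
    rcases lt_abs.mp h with h' | h'
    · exact Or.inl h'
    · exact Or.inr (by simp only [Set.mem_setOf_eq]; linarith)
  have hP : (μ {ω | y < |S ω|}).toReal ≤ (1 - p y) + p (-y) := by
    calc (μ {ω | y < |S ω|}).toReal
        ≤ (μ ({ω | y < S ω} ∪ {ω | S ω ≤ -y})).toReal :=
          ENNReal.toReal_mono (measure_ne_top _ _) (measure_mono hsub)
      _ ≤ (μ {ω | y < S ω} + μ {ω | S ω ≤ -y}).toReal :=
          ENNReal.toReal_mono (by finiteness) (measure_union_le _ _)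
      _ = (μ {ω | y < S ω}).toReal + (μ {ω | S ω ≤ -y}).toReal :=
          ENNReal.toReal_add (measure_ne_top _ _) (measure_ne_top _ _)
      _ = (1 - p y) + p (-y) := by rw [hgt y]
  have hPhi := Phi_add_Phi_neg y
  have hBbound : (1 - p y) + p (-y) ≤ 2 * Phi (-y) + 2 * ΔB := by
    have h1 := abs_le.mp (hDB y)
    have h2 := abs_le.mp (hDB (-y))
    linarith [h1.1, h2.2]
  have hEbound : (1 - p y) + p (-y) ≤ 2 * Phi (-y) + 2 * ΔE := by
    have h1 := abs_le.mp (hDE y)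
    have h2 := abs_le.mp (hDE (-y))
    have hq : c * (1 - (-y) ^ 2) * gpdf (-y) = c * (1 - y ^ 2) * gpdf y := by
      rw [gpdf_even, neg_pow]; ring
    rw [hq] at h2
    linarith [h1.1, h2.2]
  rcases le_total ΔE ΔB with h | h
  · rw [min_eq_left h]; linarith
  · rw [min_eq_right h]; linarith

set_option maxHeartbeats 1000000 in
/-- Studentized tail bound (empirical variance estimator `σ̂`): for i.i.d. centered
`ξᵢ` with kurtosis bounded by `K`, for every `x > 0` and `a > 1`,
`P(√n |ξ̄_n| > σ̂ x) ≤ 2(Φ(-x/√(a(1+x²/n))) + min(Δ_E, Δ_B)) + exp(-n(1-1/a)²/(2K))`. -/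
theorem stmt_14 {Ω : Type*} [MeasurableSpace Ω] (μ : Measure Ω) [IsProbabilityMeasure μ]
    (n : ℕ) (hn : 1 ≤ n) (a K : ℝ) (ha : 1 < a)
    (ξ : Fin n → Ω → ℝ) (ξ₀ : Ω → ℝ)
    (hmeas : ∀ i, Measurable (ξ i)) (hmeas₀ : Measurable ξ₀)
    (hindep : iIndepFun ξ μ)
    (hid : ∀ i, IdentDistrib (ξ i) ξ₀ μ μ)
    (hint4 : Integrable (fun ω => ξ₀ ω ^ 4) μ)
    (hmean : ∫ ω, ξ₀ ω ∂μ = 0)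
    (σ : ℝ) (hσpos : 0 < σ) (hσ : σ ^ 2 = ∫ ω, ξ₀ ω ^ 2 ∂μ)
    (hkurt : (∫ ω, ξ₀ ω ^ 4 ∂μ) / σ ^ 4 ≤ K)
    (S : Ω → ℝ) (hS : S = fun ω => Real.sqrt n * ((∑ i, ξ i ω) / n) / σ)
    (lam3 ΔB ΔE : ℝ)
    (hlam3 : lam3 = (∫ ω, ξ₀ ω ^ 3 ∂μ) / σ ^ 3)
    (hΔB : ΔB = ⨆ x : ℝ, |(μ {ω | S ω ≤ x}).toReal - Phi x|)
    (hΔE : ΔE = ⨆ x : ℝ,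
      |(μ {ω | S ω ≤ x}).toReal - Phi x - lam3 / (6 * Real.sqrt n) * (1 - x ^ 2) * gpdf x|) :
    ∀ x : ℝ, 0 < x →
      (μ {ω | Real.sqrt ((∑ i, (ξ i ω - (∑ j, ξ j ω) / n) ^ 2) / n) * x
            < Real.sqrt n * |(∑ i, ξ i ω) / n|}).toReal
        ≤ 2 * (Phi (-(x / Real.sqrt (a * (1 + x ^ 2 / n)))) + min ΔE ΔB)
          + Real.exp (-(n * (1 - 1 / a) ^ 2) / (2 * K)) := by
  intro x hx
  have hnn : (0:ℝ) < n := by exact_mod_cast Nat.lt_of_lt_of_le Nat.zero_lt_one hn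
  set nn : ℝ := (n : ℝ) with hnndef
  -- basic positivity
  have hapos : (0:ℝ) < a := lt_trans one_pos ha
  have hd : (0:ℝ) < a * (1 + x ^ 2 / nn) := by positivity
  set y : ℝ := x / Real.sqrt (a * (1 + x ^ 2 / nn)) with hy
  have hy_pos : 0 < y := by positivity
  have hy_sq : y ^ 2 = x ^ 2 / (a * (1 + x ^ 2 / nn)) := by
    rw [hy, div_pow, Real.sq_sqrt hd.le]
  -- measurability of S
  have m1 : Measurable fun ω => ∑ i, ξ i ω :=
    Finset.measurable_sum _ fun i _ => hmeas i
  have hSmeas : Measurable S := by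
    rw [hS]; exact ((m1.div_const _).const_mul _).div_const _
  -- fourth moment
  set M₄ : ℝ := ∫ ω, ξ₀ ω ^ 4 ∂μ with hM₄
  have hgB : Integrable (fun ω => 1 + ξ₀ ω ^ 4) μ := (integrable_const 1).add hint4
  have hint2sq : Integrable (fun ω => ξ₀ ω ^ 2) μ := by
    refine Integrable.mono' hgB ((hmeas₀.pow_const 2).aestronglyMeasurable) ?_
    filter_upwards with ω
    rw [Real.norm_eq_abs, abs_of_nonneg (sq_nonneg _)]
    nlinarith [sq_nonneg (ξ₀ ω ^ 2 - 1)]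
  have hσ4le : σ ^ 4 ≤ M₄ := by
    have iC : Integrable (fun ω => 2 * σ ^ 2 * ξ₀ ω ^ 2) μ := hint2sq.const_mul _
    have hexp : ∫ ω, (ξ₀ ω ^ 2 - σ ^ 2) ^ 2 ∂μ = M₄ - σ ^ 4 := by
      have hpt : ∀ ω, (ξ₀ ω ^ 2 - σ ^ 2) ^ 2
          = ξ₀ ω ^ 4 - 2 * σ ^ 2 * ξ₀ ω ^ 2 + σ ^ 2 * σ ^ 2 := fun ω => by ring
      simp_rw [hpt]
      have iAB : Integrable (fun ω => ξ₀ ω ^ 4 - 2 * σ ^ 2 * ξ₀ ω ^ 2) μ := hint4.sub iC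
      rw [integral_add iAB (integrable_const _),
        integral_sub hint4 iC, integral_const, integral_const_mul]
      simp [← hσ]
      ring
    have hnn2 := integral_nonneg (μ := μ) (f := fun ω => (ξ₀ ω ^ 2 - σ ^ 2) ^ 2)
      (fun ω => sq_nonneg _)
    rw [hexp] at hnn2
    linarith
  have hM₄pos : 0 < M₄ := lt_of_lt_of_le (by positivity) hσ4le
  have hKge : M₄ / σ ^ 4 ≤ K := hkurt
  have hKpos : 0 < K := by
    have : (1:ℝ) ≤ M₄ / σ ^ 4 := by
      rw [le_div_iff₀ (by positivity)]; linarith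
    linarith
  have hM₄K : M₄ ≤ K * σ ^ 4 := by
    rwa [div_le_iff₀ (by positivity : (0:ℝ) < σ ^ 4)] at hKge
  -- the two tail sets
  set U1 : Set Ω := {ω | y < |S ω|} with hU1
  set U2 : Set Ω := {ω | ∑ i, ξ i ω ^ 2 ≤ nn * σ ^ 2 / a} with hU2
  -- event inclusion
  have hsub : {ω | Real.sqrt ((∑ i, (ξ i ω - (∑ j, ξ j ω) / n) ^ 2) / n) * x
      < Real.sqrt n * |(∑ i, ξ i ω) / n|} ⊆ U1 ∪ U2 := by
    intro ω hω
    simp only [Set.mem_setOf_eq] at hω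
    by_cases h2 : ∑ i, ξ i ω ^ 2 ≤ nn * σ ^ 2 / a
    · exact Or.inr h2
    push_neg at h2
    left
    show y < |S ω|
    set b : ℝ := (∑ j, ξ j ω) / n with hb
    set A : ℝ := (∑ i, ξ i ω ^ 2) / nn with hA
    have hAgt : σ ^ 2 / a < A := by
      rw [hA, lt_div_iff₀ hnn]
      calc σ ^ 2 / a * nn = nn * σ ^ 2 / a := by ring
        _ < ∑ i, ξ i ω ^ 2 := h2
    have hnb : ∑ j, ξ j ω = nn * b := by
      rw [hb]; field_simp; rfl
    have hsumsq : ∑ i, (ξ i ω - b) ^ 2 = (∑ i, ξ i ω ^ 2) - nn * b ^ 2 := by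
      have hpt : ∀ i, (ξ i ω - b) ^ 2 = ξ i ω ^ 2 - 2 * b * ξ i ω + b ^ 2 :=
        fun i => by ring
      rw [Finset.sum_congr rfl fun i _ => hpt i]
      rw [Finset.sum_add_distrib, Finset.sum_sub_distrib, ← Finset.mul_sum,
        Finset.sum_const, Finset.card_univ, Fintype.card_fin, nsmul_eq_mul, hnb]
      ring
    set V : ℝ := (∑ i, (ξ i ω - b) ^ 2) / nn with hV
    have hVnonneg : 0 ≤ V := by
      rw [hV]
      exact div_nonneg (Finset.sum_nonneg fun i _ => sq_nonneg _) hnn.le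
    have hVA : V = A - b ^ 2 := by
      rw [hV, hA, hsumsq]; field_simp
    -- squaring the hypothesis
    have hω' : Real.sqrt V * x < Real.sqrt nn * |b| := hω
    have hlhs0 : 0 ≤ Real.sqrt V * x := mul_nonneg (Real.sqrt_nonneg _) hx.le
    have hsq : V * x ^ 2 < nn * b ^ 2 := by
      have h := mul_self_lt_mul_self hlhs0 hω'
      have e1 : Real.sqrt V * x * (Real.sqrt V * x) = V * x ^ 2 := by
        rw [show Real.sqrt V * x * (Real.sqrt V * x)
          = (Real.sqrt V * Real.sqrt V) * x ^ 2 by ring,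
          Real.mul_self_sqrt hVnonneg]
      have e2 : Real.sqrt nn * |b| * (Real.sqrt nn * |b|) = nn * b ^ 2 := by
        rw [show Real.sqrt nn * |b| * (Real.sqrt nn * |b|)
          = (Real.sqrt nn * Real.sqrt nn) * (|b| * |b|) by ring,
          Real.mul_self_sqrt hnn.le, abs_mul_abs_self]
        ring
      rw [e1, e2] at h
      exact h
    have h3 : A * x ^ 2 < (nn + x ^ 2) * b ^ 2 := by
      have hA2 : A * x ^ 2 = V * x ^ 2 + b ^ 2 * x ^ 2 := by rw [hVA]; ring
      have hg : (nn + x ^ 2) * b ^ 2 = nn * b ^ 2 + b ^ 2 * x ^ 2 := by ring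
      rw [hA2, hg]
      linarith [hsq]
    have h4 : σ ^ 2 * x ^ 2 < a * (nn + x ^ 2) * b ^ 2 := by
      have h5 : σ ^ 2 / a * x ^ 2 < A * x ^ 2 :=
        mul_lt_mul_of_pos_right hAgt (by positivity)
      have h6 : σ ^ 2 * x ^ 2 = a * (σ ^ 2 / a * x ^ 2) := by field_simp
      calc σ ^ 2 * x ^ 2 = a * (σ ^ 2 / a * x ^ 2) := h6
        _ < a * ((nn + x ^ 2) * b ^ 2) :=
            mul_lt_mul_of_pos_left (lt_trans h5 h3) hapos
        _ = a * (nn + x ^ 2) * b ^ 2 := by ring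
    have hSsq : (S ω) ^ 2 = nn * b ^ 2 / σ ^ 2 := by
      have hSω : S ω = Real.sqrt nn * b / σ := by rw [hS, hb]
      rw [hSω, div_pow, mul_pow, Real.sq_sqrt hnn.le]
    have hy2lt : y ^ 2 < (S ω) ^ 2 := by
      rw [hy_sq, hSsq, div_lt_div_iff₀ (by positivity) (by positivity)]
      have hDeq : nn * b ^ 2 * (a * (1 + x ^ 2 / nn)) = a * (nn + x ^ 2) * b ^ 2 := by
        field_simp
      rw [hDeq]
      calc x ^ 2 * σ ^ 2 = σ ^ 2 * x ^ 2 := by ring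
        _ < a * (nn + x ^ 2) * b ^ 2 := h4
    have : y ^ 2 < |S ω| ^ 2 := by rwa [sq_abs]
    exact lt_of_pow_lt_pow_left₀ 2 (abs_nonneg _) this
  -- bound on U2 via Chernoff
  have hU2bound : (μ U2).toReal ≤ Real.exp (-(nn * (1 - 1 / a) ^ 2) / (2 * K)) := by
    set l : ℝ := σ ^ 2 * (1 - 1 / a) / M₄ with hl
    have hlpos : 0 ≤ l := by
      have h1a : 0 < 1 - 1 / a := by
        rw [sub_pos, div_lt_one hapos]; exact ha
      positivity
    have hcher := chernoff_lower μ n (fun i ω => ξ i ω ^ 2) (fun ω => ξ₀ ω ^ 2)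
      (fun i => (hmeas i).pow_const 2) (hmeas₀.pow_const 2)
      (hindep.comp (fun _ u => u ^ 2) (fun _ => measurable_id.pow_const 2))
      (fun i => (hid i).comp (measurable_id.pow_const 2))
      (fun ω => sq_nonneg _) (fun i ω => sq_nonneg _)
      hint2sq (by simp_rw [← pow_mul]; exact hint4)
      (σ ^ 2) M₄ hσ (by rw [hM₄]; congr 1; ext ω; rw [← pow_mul])
      l hlpos (nn * σ ^ 2 / a)
    have hU2eq : U2 = {ω | ∑ i, ξ i ω ^ 2 ≤ nn * σ ^ 2 / a} := rfl
    rw [hU2eq]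
    refine le_trans hcher (Real.exp_le_exp.mpr ?_)
    have hexp_eq : l * (nn * σ ^ 2 / a) - l * nn * σ ^ 2 + l ^ 2 * nn * M₄ / 2
        = -(nn * σ ^ 4 * (1 - 1 / a) ^ 2) / (2 * M₄) := by
      rw [hl]
      field_simp
      ring
    rw [hexp_eq, neg_div, neg_div, neg_le_neg_iff,
      div_le_div_iff₀ (by positivity) (by positivity)]
    have base : 0 ≤ nn * (1 - 1 / a) ^ 2 := by positivity
    calc nn * (1 - 1 / a) ^ 2 * (2 * M₄)
        ≤ nn * (1 - 1 / a) ^ 2 * (2 * (K * σ ^ 4)) := by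
          apply mul_le_mul_of_nonneg_left _ base
          linarith [hM₄K]
      _ = nn * σ ^ 4 * (1 - 1 / a) ^ 2 * (2 * K) := by ring
  -- bound on U1 via tail_bound
  have hU1bound : (μ U1).toReal ≤ 2 * (Phi (-y) + min ΔE ΔB) :=
    tail_bound μ S hSmeas (lam3 / (6 * Real.sqrt n)) ΔB ΔE hΔB hΔE y hy_pos.le
  -- combine
  calc (μ {ω | Real.sqrt ((∑ i, (ξ i ω - (∑ j, ξ j ω) / n) ^ 2) / n) * x
        < Real.sqrt n * |(∑ i, ξ i ω) / n|}).toReal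
      ≤ (μ (U1 ∪ U2)).toReal :=
        ENNReal.toReal_mono (measure_ne_top _ _) (measure_mono hsub)
    _ ≤ (μ U1 + μ U2).toReal :=
        ENNReal.toReal_mono (by finiteness) (measure_union_le _ _)
    _ = (μ U1).toReal + (μ U2).toReal :=
        ENNReal.toReal_add (measure_ne_top _ _) (measure_ne_top _ _)
    _ ≤ 2 * (Phi (-y) + min ΔE ΔB) + Real.exp (-(nn * (1 - 1 / a) ^ 2) / (2 * K)) :=
        add_le_add hU1bound hU2bound
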